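/- Under SGD on the LoRA adapter with B_0 = 0 and update rules B_{n+1} = B_n − ηγ v_n x_nᵀ A_nᵀ, A_{n+1} = A_n − ηγ B_nᵀ v_n x_nᵀ, for every n ≥ 1 there exist matrices C_n and D_n (polynomials in the data with bounded norm independent of γ) such that B_n = (−ηγ Σ_{k<n} v_k x_kᵀ + γ² C_n) A_0ᵀ and A_n = A_0 + γ² D_n. -/

import Mathlib

open Matrix Finset

/-- Auxiliary pair (Cₙ, Eₙ) of correction matrices. -/
noncomputable def lora_CE {d₁ d₂ : ℕ} (η γ : ℝ) (v : ℕ → Fin d₁ → ℝ) (x : ℕ → Fin d₂ → ℝ) :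
    ℕ → Matrix (Fin d₁) (Fin d₂) ℝ × Matrix (Fin d₂) (Fin d₂) ℝ
  | 0 => (0, 0)
  | n+1 =>
      ((lora_CE η γ v x n).1
          - (η*γ) • (vecMulVec (v n) (x n) * ((lora_CE η γ v x n).2)ᵀ),
       (lora_CE η γ v x n).2
          + (η^2) • ((∑ k ∈ Finset.range n, vecMulVec (v k) (x k))ᵀ * vecMulVec (v n) (x n))
          - (η*γ) • (((lora_CE η γ v x n).1)ᵀ * vecMulVec (v n) (x n)))

lemma lora_entry_mul_bound {a b c : ℕ} (X : Matrix (Fin a) (Fin b) ℝ)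
    (Y : Matrix (Fin b) (Fin c) ℝ) (kX kY : ℝ)
    (hX : ∀ i j, |X i j| ≤ kX) (hY : ∀ i j, |Y i j| ≤ kY) (hkY : 0 ≤ kY) :
    ∀ i j, |(X * Y) i j| ≤ (b : ℝ) * kX * kY := by
  intro i j
  rw [Matrix.mul_apply]
  calc |∑ l, X i l * Y l j| ≤ ∑ l, |X i l * Y l j| := Finset.abs_sum_le_sum_abs _ _
    _ ≤ ∑ _l : Fin b, kX * kY := by
        refine Finset.sum_le_sum fun l _ => ?_
        rw [abs_mul]
        exact mul_le_mul (hX i l) (hY l j) (abs_nonneg _) ((abs_nonneg _).trans (hX i l))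
    _ = (b : ℝ) * kX * kY := by
        rw [Finset.sum_const, Finset.card_univ, Fintype.card_fin, nsmul_eq_mul, mul_assoc]

lemma lora_vecMulVec_entry {a b : ℕ} (v : Fin a → ℝ) (x : Fin b → ℝ) :
    ∀ i j, |vecMulVec v x i j| ≤ ‖v‖ * ‖x‖ := by
  intro i j
  rw [vecMulVec_apply, abs_mul]
  exact mul_le_mul (by simpa using norm_le_pi_norm v i) (by simpa using norm_le_pi_norm x j)
    (abs_nonneg _) (norm_nonneg _)

theorem stmt_5 {d₁ d₂ r : ℕ}
    (η : ℝ) (v : ℕ → Fin d₁ → ℝ) (x : ℕ → Fin d₂ → ℝ)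
    (A₀ : Matrix (Fin r) (Fin d₂) ℝ)
    (B : ℝ → ℕ → Matrix (Fin d₁) (Fin r) ℝ)
    (A : ℝ → ℕ → Matrix (Fin r) (Fin d₂) ℝ)
    (hB0 : ∀ γ : ℝ, B γ 0 = 0) (hA0 : ∀ γ : ℝ, A γ 0 = A₀)
    (hBrec : ∀ γ : ℝ, ∀ n : ℕ,
      B γ (n + 1) = B γ n - (η * γ) • (vecMulVec (v n) (x n) * (A γ n)ᵀ))
    (hArec : ∀ γ : ℝ, ∀ n : ℕ,
      A γ (n + 1) = A γ n - (η * γ) • ((B γ n)ᵀ * vecMulVec (v n) (x n)))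
    (n : ℕ) (hn : 1 ≤ n) :
    ∃ K : ℝ, ∀ γ : ℝ, |γ| ≤ 1 →
      ∃ (C : Matrix (Fin d₁) (Fin d₂) ℝ) (D : Matrix (Fin r) (Fin d₂) ℝ),
        B γ n = ((-(η * γ)) • (∑ k ∈ range n, vecMulVec (v k) (x k)) * A₀ᵀ
                  + γ ^ 2 • (C * A₀ᵀ)) ∧
        A γ n = A₀ + γ ^ 2 • D ∧
        (∀ i j, |C i j| ≤ K) ∧ (∀ i j, |D i j| ≤ K) := by
  -- Step 1: the exact identities, valid for all γ and all n.
  have key : ∀ γ : ℝ, ∀ m : ℕ,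
      B γ m = ((-(η * γ)) • (∑ k ∈ range m, vecMulVec (v k) (x k)) * A₀ᵀ
                  + γ ^ 2 • ((lora_CE η γ v x m).1 * A₀ᵀ)) ∧
      A γ m = A₀ + γ ^ 2 • (A₀ * (lora_CE η γ v x m).2) := by
    intro γ m
    induction m with
    | zero => simp [hB0, hA0, lora_CE]
    | succ m ih =>
      obtain ⟨ihB, ihA⟩ := ih
      constructor
      · rw [hBrec, ihB, ihA, lora_CE]
        simp only [Finset.sum_range_succ, transpose_add, transpose_smul, transpose_mul,
          Matrix.mul_add, Matrix.add_mul, Matrix.sub_mul, Matrix.mul_smul, Matrix.smul_mul,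
          Matrix.mul_assoc, smul_add, smul_sub, smul_smul, neg_smul, Matrix.neg_mul, neg_mul]
        module
      · rw [hArec, ihB, ihA, lora_CE]
        simp only [Finset.sum_range_succ, transpose_add, transpose_smul, transpose_mul,
          transpose_transpose, transpose_neg, Matrix.mul_add, Matrix.add_mul, Matrix.sub_mul,
          Matrix.mul_sub, Matrix.mul_smul, Matrix.smul_mul, Matrix.mul_assoc, smul_add,
          smul_sub, smul_smul, neg_smul, Matrix.neg_mul, neg_mul]
        module
  -- Step 2: uniform bounds on the entries of (Cₙ, Eₙ) for |γ| ≤ 1.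
  have bnd : ∀ m : ℕ, ∃ K : ℝ, 0 ≤ K ∧ ∀ γ : ℝ, |γ| ≤ 1 →
      (∀ i j, |(lora_CE η γ v x m).1 i j| ≤ K) ∧
      (∀ i j, |(lora_CE η γ v x m).2 i j| ≤ K) := by
    intro m
    induction m with
    | zero => exact ⟨0, le_refl 0, fun γ _ => by simp [lora_CE]⟩
    | succ m ih =>
      obtain ⟨K, hK0, hK⟩ := ih
      set mb : ℝ := ‖v m‖ * ‖x m‖ with hmb
      have hmb0 : 0 ≤ mb := mul_nonneg (norm_nonneg _) (norm_nonneg _)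
      set s : ℝ := ∑ k ∈ Finset.range m, ‖v k‖ * ‖x k‖ with hs
      have hs0 : 0 ≤ s := Finset.sum_nonneg fun k _ =>
        mul_nonneg (norm_nonneg _) (norm_nonneg _)
      refine ⟨K + |η| * ((d₂ : ℝ) * K * mb) + η^2 * ((d₁ : ℝ) * s * mb)
          + |η| * ((d₁ : ℝ) * K * mb), by positivity, fun γ hγ => ?_⟩
      obtain ⟨hC, hE⟩ := hK γ hγ
      have hM := lora_vecMulVec_entry (v m) (x m)
      have hηγ : |η * γ| ≤ |η| := by
        rw [abs_mul]
        calc |η| * |γ| ≤ |η| * 1 := by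
              exact mul_le_mul_of_nonneg_left hγ (abs_nonneg _)
          _ = |η| := mul_one _
      have hS : ∀ i j, |(∑ k ∈ Finset.range m, vecMulVec (v k) (x k)) i j| ≤ s := by
        intro i j
        rw [Matrix.sum_apply]
        calc |∑ k ∈ Finset.range m, vecMulVec (v k) (x k) i j|
            ≤ ∑ k ∈ Finset.range m, |vecMulVec (v k) (x k) i j| :=
              Finset.abs_sum_le_sum_abs _ _
          _ ≤ s := Finset.sum_le_sum fun k _ => lora_vecMulVec_entry (v k) (x k) i j
      constructor
      · intro i j
        have h1 : |(vecMulVec (v m) (x m) * ((lora_CE η γ v x m).2)ᵀ) i j|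
            ≤ (d₂ : ℝ) * mb * K :=
          lora_entry_mul_bound _ _ mb K hM (fun i j => hE j i) hK0 i j
        show |((lora_CE η γ v x m).1
            - (η*γ) • (vecMulVec (v m) (x m) * ((lora_CE η γ v x m).2)ᵀ)) i j| ≤ _
        rw [Matrix.sub_apply, Matrix.smul_apply, smul_eq_mul]
        calc |_ - _| ≤ |(lora_CE η γ v x m).1 i j|
              + |η * γ| * |(vecMulVec (v m) (x m) * ((lora_CE η γ v x m).2)ᵀ) i j| := by
              rw [← abs_mul]; exact abs_sub _ _
          _ ≤ K + |η| * ((d₂ : ℝ) * K * mb) := by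
              have : |η * γ| * |(vecMulVec (v m) (x m) * ((lora_CE η γ v x m).2)ᵀ) i j|
                  ≤ |η| * ((d₂ : ℝ) * mb * K) :=
                mul_le_mul hηγ h1 (abs_nonneg _) (abs_nonneg _)
              nlinarith [hC i j]
          _ ≤ _ := by
              have t4 : 0 ≤ η^2 * ((d₁:ℝ) * s * mb) :=
                mul_nonneg (sq_nonneg η)
                  (mul_nonneg (mul_nonneg (Nat.cast_nonneg d₁) hs0) hmb0)
              have t5 : 0 ≤ |η| * ((d₁:ℝ) * K * mb) :=
                mul_nonneg (abs_nonneg η)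
                  (mul_nonneg (mul_nonneg (Nat.cast_nonneg d₁) hK0) hmb0)
              linarith
      · intro i j
        have h2 : |((∑ k ∈ Finset.range m, vecMulVec (v k) (x k))ᵀ
              * vecMulVec (v m) (x m)) i j| ≤ (d₁ : ℝ) * s * mb :=
          lora_entry_mul_bound _ _ s mb (fun i j => hS j i) hM hmb0 i j
        have h3 : |(((lora_CE η γ v x m).1)ᵀ * vecMulVec (v m) (x m)) i j|
            ≤ (d₁ : ℝ) * K * mb :=
          lora_entry_mul_bound _ _ K mb (fun i j => hC j i) hM hmb0 i j
        show |((lora_CE η γ v x m).2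
            + (η^2) • ((∑ k ∈ Finset.range m, vecMulVec (v k) (x k))ᵀ * vecMulVec (v m) (x m))
            - (η*γ) • (((lora_CE η γ v x m).1)ᵀ * vecMulVec (v m) (x m))) i j| ≤ _
        rw [Matrix.sub_apply, Matrix.add_apply, Matrix.smul_apply, Matrix.smul_apply,
          smul_eq_mul, smul_eq_mul]
        have hη2 : |η^2| = η^2 := abs_of_nonneg (sq_nonneg η)
        calc |_| ≤ |(lora_CE η γ v x m).2 i j|
              + η^2 * |((∑ k ∈ Finset.range m, vecMulVec (v k) (x k))ᵀ
                  * vecMulVec (v m) (x m)) i j|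
              + |η * γ| * |(((lora_CE η γ v x m).1)ᵀ * vecMulVec (v m) (x m)) i j| := by
              have := abs_sub ((lora_CE η γ v x m).2 i j
                + η^2 * ((∑ k ∈ Finset.range m, vecMulVec (v k) (x k))ᵀ
                    * vecMulVec (v m) (x m)) i j)
                ((η*γ) * (((lora_CE η γ v x m).1)ᵀ * vecMulVec (v m) (x m)) i j)
              have h4 := abs_add_le ((lora_CE η γ v x m).2 i j)
                (η^2 * ((∑ k ∈ Finset.range m, vecMulVec (v k) (x k))ᵀ
                    * vecMulVec (v m) (x m)) i j)
              rw [abs_mul, abs_mul, hη2] at *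
              linarith
          _ ≤ K + η^2 * ((d₁ : ℝ) * s * mb) + |η| * ((d₁ : ℝ) * K * mb) := by
              have t1 := hE i j
              have t2 : η^2 * |((∑ k ∈ Finset.range m, vecMulVec (v k) (x k))ᵀ
                  * vecMulVec (v m) (x m)) i j| ≤ η^2 * ((d₁ : ℝ) * s * mb) :=
                mul_le_mul_of_nonneg_left h2 (sq_nonneg η)
              have t3 : |η * γ| * |(((lora_CE η γ v x m).1)ᵀ * vecMulVec (v m) (x m)) i j|
                  ≤ |η| * ((d₁ : ℝ) * K * mb) :=
                mul_le_mul hηγ h3 (abs_nonneg _) (abs_nonneg _)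
              linarith
          _ ≤ _ := by
              have t4 : 0 ≤ |η| * ((d₂:ℝ) * K * mb) :=
                mul_nonneg (abs_nonneg η)
                  (mul_nonneg (mul_nonneg (Nat.cast_nonneg d₂) hK0) hmb0)
              linarith
  -- Step 3: combine.
  obtain ⟨K, hK0, hK⟩ := bnd n
  set a : ℝ := ∑ i : Fin r, ∑ j : Fin d₂, |A₀ i j| with ha
  have ha0 : 0 ≤ a := Finset.sum_nonneg fun i _ =>
    Finset.sum_nonneg fun j _ => abs_nonneg _
  have hAb : ∀ i j, |A₀ i j| ≤ a := by
    intro i j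
    calc |A₀ i j| ≤ ∑ j' : Fin d₂, |A₀ i j'| :=
          Finset.single_le_sum (f := fun j' => |A₀ i j'|)
            (fun j' _ => abs_nonneg _) (Finset.mem_univ j)
      _ ≤ a :=
          Finset.single_le_sum (f := fun i' => ∑ j' : Fin d₂, |A₀ i' j'|)
            (fun i' _ => Finset.sum_nonneg fun j' _ => abs_nonneg _) (Finset.mem_univ i)
  refine ⟨K + (d₂ : ℝ) * a * K, fun γ hγ => ?_⟩
  obtain ⟨hC, hE⟩ := hK γ hγ
  refine ⟨(lora_CE η γ v x n).1, A₀ * (lora_CE η γ v x n).2,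
    (key γ n).1, (key γ n).2, ?_, ?_⟩
  · intro i j
    have h0 : (0:ℝ) ≤ (d₂ : ℝ) * a * K :=
      mul_nonneg (mul_nonneg (Nat.cast_nonneg d₂) ha0) hK0
    linarith [hC i j]
  · intro i j
    have h := lora_entry_mul_bound A₀ (lora_CE η γ v x n).2 a K
      (fun i j => hAb i j) hE hK0 i j
    linarith
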